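/- arXiv:1304.5778 — 3 statements merged into one kernel-verified Lean document; each statement's English description precedes it below -/
import Mathlib

section
/- In the augmentation variety computation for the Hopf link: if ε is an algebra map on generators a₁₂, a₂₁ with values in ℂ (with ε(λ_i), ε(μ_i), ε(Q) ∈ ℂ*) satisfying ε(λ₁μ₁λ₂^{-1}μ₂^{-1} - 1)·ε(a₁₂) = 0, ε(1 - λ₁^{-1}μ₁^{-1}λ₂μ₂)·ε(a₂₁) = 0, ε(Q - λ₁ - μ₁ + λ₁μ₁ + λ₁μ₁μ₂^{-1} a₁₂a₂₁) = 0, ε(λ₂ - μ₁)·ε(a₂₁) = 0, and ε(Q - λ₂ - μ₂ + λ₂μ₂ + λ₂ a₁₂a₂₁) = 0, then either (i) ε(a₁₂)ε(a₂₁) = 0 and both Q - λ_i - μ_i + λ_iμ_i vanish under ε for i = 1,2, or (ii) ε(a₁₂)ε(a₂₁) ≠ 0 and ε(λ₂) = ε(μ₁), ε(λ₁) = ε(μ₂). -/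
/-- Augmentations of the Hopf link DGA: any scalar (rank-1) solution of the
equations `ε∘∂ = 0` for the degree-one generators `b₁₂, b₂₁, c₁₁, c₂₁, c₂₂, c₁₂`
satisfies either (i) `a₁₂a₂₁ = 0` and both unknot equations
`Q - λᵢ - μᵢ + λᵢμᵢ = 0`, or (ii) `a₁₂a₂₁ ≠ 0` and `λ₂ = μ₁`, `λ₁ = μ₂`. -/
theorem stmt10 (Q l1 m1 l2 m2 a12 a21 : ℂ)
    (hQ : Q ≠ 0) (hl1 : l1 ≠ 0) (hm1 : m1 ≠ 0) (hl2 : l2 ≠ 0) (hm2 : m2 ≠ 0)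
    (hb12 : (l1 * m1 * l2⁻¹ * m2⁻¹ - 1) * a12 = 0)
    (hb21 : (1 - l1⁻¹ * m1⁻¹ * l2 * m2) * a21 = 0)
    (hc11 : Q - l1 - m1 + l1 * m1 + l1 * m1 * m2⁻¹ * a12 * a21 = 0)
    (hc21 : (l2 - m1) * a21 = 0)
    (hc22 : Q - l2 - m2 + l2 * m2 + l2 * a12 * a21 = 0)
    (hc12 : Q * a12 + l1 * m2⁻¹ * a12 * (m1 * m2 - m1 - m2 + m1 * a21 * a12) = 0) :
    (a12 * a21 = 0 ∧ Q - l1 - m1 + l1 * m1 = 0 ∧ Q - l2 - m2 + l2 * m2 = 0) ∨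
    (a12 * a21 ≠ 0 ∧ l2 = m1 ∧ l1 = m2) := by
  by_cases h : a12 * a21 = 0
  · left
    refine ⟨h, ?_, ?_⟩
    · have : l1 * m1 * m2⁻¹ * a12 * a21 = 0 := by
        rw [mul_assoc, h, mul_zero]
      linear_combination hc11 - this
    · have : l2 * a12 * a21 = 0 := by rw [mul_assoc, h, mul_zero]
      linear_combination hc22 - this
  · right
    have ha12 : a12 ≠ 0 := fun h' => h (by rw [h', zero_mul])
    have ha21 : a21 ≠ 0 := fun h' => h (by rw [h', mul_zero])
    have h2 : l2 = m1 :=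
      sub_eq_zero.1 ((mul_eq_zero.1 hc21).resolve_right ha21)
    refine ⟨h, h2, ?_⟩
    have hb : l1 * m1 * l2⁻¹ * m2⁻¹ - 1 = 0 :=
      (mul_eq_zero.1 hb12).resolve_right ha12
    subst h2
    field_simp at hb
    exact sub_eq_zero.1 (hb.trans (mul_zero m2))
end

section
/- Define the three Laurent-polynomial expressions A₁ = -λ₁ + λ₂ - (1 - Qλ₁)μ₁ + (1 - Qλ₂)μ₂, A₂ = (1 - λ₂ - μ₂ + Qλ₂μ₂)(μ₁ - λ₂), A₃ = (1 - λ₁ - μ₁ + Qλ₁μ₁)(μ₂ - λ₁) in (ℂ*)⁴ with parameter Q. Then the common zero locus of A₁, A₂, A₃ contains both V(1²) = {1 - λ_i - μ_i + Qλ_iμ_i = 0, i=1,2} and V(2) = {μ₁ = λ₂, μ₂ = λ₁}. -/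
/-- The common zero locus of the three classical operators `A₁, A₂, A₃` for the
Hopf link contains both components `V(1²)` (two unknot curves) and
`V(2) = {μ₁ = λ₂, μ₂ = λ₁}` of the augmentation variety. -/
theorem stmt11 (Q l1 m1 l2 m2 : ℂ)
    (hl1 : l1 ≠ 0) (hm1 : m1 ≠ 0) (hl2 : l2 ≠ 0) (hm2 : m2 ≠ 0)
    (h : (1 - l1 - m1 + Q * l1 * m1 = 0 ∧ 1 - l2 - m2 + Q * l2 * m2 = 0) ∨
         (m1 = l2 ∧ m2 = l1)) :
    (-l1 + l2 - (1 - Q * l1) * m1 + (1 - Q * l2) * m2 = 0) ∧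
    ((1 - l2 - m2 + Q * l2 * m2) * (m1 - l2) = 0) ∧
    ((1 - l1 - m1 + Q * l1 * m1) * (m2 - l1) = 0) := by
  rcases h with ⟨h1, h2⟩ | ⟨h1, h2⟩
  · refine ⟨by linear_combination h1 - h2, by rw [h2]; ring, by rw [h1]; ring⟩
  · subst h1 h2
    refine ⟨by ring, by ring, by ring⟩
end

section
/- Consider the (2,4) torus link component V(2) cut out in (ℂ*)⁵ (coordinates λ₁,λ₂,μ₁,μ₂,Q) by λ₁μ₁² = λ₂μ₂² and μ₁λ₁² + (Qμ₂ - μ₁μ₂²)λ₁ - μ₂³ = 0. For fixed generic Q, the intersection of V(2) with the hypersurface pair {Q - λ₂ - μ₂ + λ₂μ₂ = 0}, projected to the (λ₁,μ₁)-plane, contains the curve {Q - λ₁ - μ₁ + λ₁μ₁ = 0}: i.e., for every (λ₁,μ₁) ∈ (ℂ*)² with Q - λ₁ - μ₁ + λ₁μ₁ = 0 there exist λ₂,μ₂ ∈ ℂ* with Q - λ₂ - μ₂ + λ₂μ₂ = 0 and the two V(2) equations satisfied. -/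
/-- Lagrangian reduction for the `(2,4)` torus link: for generic `Q` and any point
`(λ₁,μ₁)` of the unknot curve `Q - λ₁ - μ₁ + λ₁μ₁ = 0`, there exist
`(λ₂,μ₂) ∈ (ℂ*)²` on the unknot curve such that the two defining equations of the
mixed component `V(2)` of the `(2,4)` torus link hold. -/
theorem stmt13 (Q : ℂ) (hQ0 : Q ≠ 0) (hQ1 : Q ≠ 1) (l1 m1 : ℂ)
    (hl1 : l1 ≠ 0) (hm1 : m1 ≠ 0) (h : Q - l1 - m1 + l1 * m1 = 0) :
    ∃ l2 m2 : ℂ, l2 ≠ 0 ∧ m2 ≠ 0 ∧ Q - l2 - m2 + l2 * m2 = 0 ∧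
      l1 * m1 ^ 2 = l2 * m2 ^ 2 ∧
      m1 * l1 ^ 2 + (Q * m2 - m1 * m2 ^ 2) * l1 - m2 ^ 3 = 0 := by
  obtain ⟨s, hs⟩ : ∃ s : ℂ, s ^ 2 = (l1 * (m1 - 1)) ^ 2 + 4 * l1 * m1 :=
    IsAlgClosed.exists_pow_nat_eq _ (by norm_num : (0:ℕ) < 2)
  obtain ⟨m2, hE⟩ : ∃ m2 : ℂ, m2 ^ 2 + l1 * (m1 - 1) * m2 - l1 * m1 = 0 :=
    ⟨(l1 * (1 - m1) + s) / 2, by linear_combination hs / 4⟩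
  have hm2 : m2 ≠ 0 := by
    intro h0
    apply mul_ne_zero hl1 hm1
    linear_combination (m2 + l1 * (m1 - 1)) * h0 - hE
  refine ⟨l1 * m1 ^ 2 / m2 ^ 2, m2, ?_, hm2, ?_, ?_, ?_⟩
  · exact div_ne_zero (mul_ne_zero hl1 (pow_ne_zero _ hm1)) (pow_ne_zero _ hm2)
  · have h1 : -m2 ^ 3 + Q * m2 ^ 2 + l1 * m1 ^ 2 * m2 - l1 * m1 ^ 2 = 0 := by
      linear_combination (m1 - m2) * hE + m2 ^ 2 * h
    field_simp
    linear_combination h1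
  · field_simp
  · linear_combination (-(m2 + l1)) * hE + l1 * m2 * h
end
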